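/- Let S be a subset of X with |S| = k ≥ 1. If k < n, then there exist a profile u and an index vector b of gauge at most 2 such that the set of approval voting winners G_A(u,b) is exactly S. -/

import Mathlib

open Finset

/-- Count of numbers below `n` with residue `j` mod `k`. -/
lemma card_range_filter_mod (k j : ℕ) (hk : 0 < k) (hj : j < k) (n : ℕ) :
    #{i ∈ range n | i % k = j} = n / k + if j < n % k then 1 else 0 := by
  induction n with
  | zero => simp
  | succ n ih =>
    have hdm := Nat.div_add_mod n k
    have hmlt : n % k < k := Nat.mod_lt _ hk
    have e1 : n + 1 = (n % k + 1) + (n / k) * k := by rw [mul_comm]; omega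
    have e2 : (n + 1) % k = (n % k + 1) % k := by rw [e1, Nat.add_mul_mod_self_right]
    have e3 : (n + 1) / k = (n % k + 1) / k + n / k := by rw [e1, Nat.add_mul_div_right _ _ hk]
    have h4 : (n % k + 1) % k = if n % k + 1 = k then 0 else n % k + 1 := by
      split_ifs with h
      · simp [h]
      · exact Nat.mod_eq_of_lt (by omega)
    have h5 : (n % k + 1) / k = if n % k + 1 = k then 1 else 0 := by
      split_ifs with h
      · rw [h, Nat.div_self hk]
      · exact Nat.div_eq_of_lt (by omega)
    rw [range_add_one, filter_insert]
    by_cases h : n % k = j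
    · rw [if_pos h, card_insert_of_notMem (by simp), ih]
      split_ifs at * <;> omega
    · rw [if_neg h, ih]
      split_ifs at * <;> omega

lemma card_univ_filter_val {n : ℕ} (p : ℕ → Prop) [DecidablePred p] :
    #{i : Fin n | p i.val} = #{i ∈ range n | p i} := by
  apply Finset.card_nbij (fun i => i.val) (by
    intro a ha; simp only [coe_filter, mem_univ, true_and, mem_range, Set.mem_setOf_eq] at ha ⊢
    exact ⟨a.isLt, ha⟩) (by
    intro a ha; simp at ha ⊢; omega) (by
    intro a ha; simp at ha ⊢
    exact ⟨⟨a, ha.1⟩, ha.2, rfl⟩)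

/-- A permutation placing `a` and `c` at the top two ranks. -/
def perm2 {m : ℕ} [NeZero m] (a c : Fin m) : Equiv.Perm (Fin m) :=
  (Equiv.swap a 0).trans (Equiv.swap ((Equiv.swap a 0) c) 1)

lemma perm1_lt_one {m : ℕ} [NeZero m] (a x : Fin m) :
    ((Equiv.swap a 0) x).val < 1 ↔ x = a := by
  rw [Nat.lt_one_iff, ← Fin.val_zero m, Fin.val_eq_val, Equiv.swap_apply_eq_iff,
    Equiv.swap_apply_right]

lemma perm2_lt_two {m : ℕ} [NeZero m] (hm : 3 ≤ m) (a c x : Fin m) (hac : a ≠ c) :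
    ((perm2 a c) x).val < 2 ↔ x = a ∨ x = c := by
  have h01 : (0 : Fin m) ≠ 1 := by
    simp [Fin.ext_iff, Fin.val_one', Nat.mod_eq_of_lt (show 1 < m by omega)]
  set w := (Equiv.swap a 0) c with hw
  have hw0 : w ≠ 0 := by
    rw [hw, Ne, Equiv.swap_apply_eq_iff, Equiv.swap_apply_right]
    exact fun h => hac h.symm
  constructor
  · intro h
    by_contra hx
    push_neg at hx
    obtain ⟨hxa, hxc⟩ := hx
    have hv0 : (Equiv.swap a 0) x ≠ 0 := by
      rw [Ne, Equiv.swap_apply_eq_iff, Equiv.swap_apply_right]; exact hxa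
    have hvw : (Equiv.swap a 0) x ≠ w := fun hh => hxc ((Equiv.swap a 0).injective hh)
    simp only [perm2, Equiv.trans_apply] at h
    by_cases hv1 : (Equiv.swap a 0) x = 1
    · rw [hv1, Equiv.swap_apply_right] at h
      have hw1 : w ≠ 1 := fun hh => hvw (hv1.trans hh.symm)
      have : w.val ≠ 0 := fun hh => hw0 (Fin.ext (by simpa using hh))
      have : w.val ≠ 1 := by
        intro hh; apply hw1; apply Fin.ext
        simpa [Fin.val_one', Nat.mod_eq_of_lt (show 1 < m by omega)] using hh
      omega
    · rw [Equiv.swap_apply_of_ne_of_ne hvw hv1] at h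
      have : ((Equiv.swap a 0) x).val ≠ 0 := fun hh => hv0 (Fin.ext (by simpa using hh))
      have : ((Equiv.swap a 0) x).val ≠ 1 := by
        intro hh; apply hv1; apply Fin.ext
        simpa [Fin.val_one', Nat.mod_eq_of_lt (show 1 < m by omega)] using hh
      omega
  · rintro (rfl | rfl)
    · simp only [perm2, Equiv.trans_apply, Equiv.swap_apply_left]
      rw [Equiv.swap_apply_of_ne_of_ne (Ne.symm hw0) h01]
      simp
    · simp only [perm2, Equiv.trans_apply, ← hw, Equiv.swap_apply_left]
      simp [Fin.val_one', Nat.mod_eq_of_lt (show 1 < m by omega)]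

/-- The approval voting score `A_S(x,u,b)`: the number of individuals `i` who
have `x` among the top `b i` ranks of their ordering.  A profile assigns to
each individual `i` a rank equivalence `u i : Fin m ≃ Fin m` (rank `0` is the
top), so `x` is among the top `b i` alternatives of `u i` iff
`((u i) x).val < b i`. -/
def approvalScore {m n : ℕ} (u : Fin n → (Fin m ≃ Fin m)) (b : Fin n → ℕ)
    (x : Fin m) : ℕ :=
  (univ.filter (fun i : Fin n => ((u i) x).val < b i)).card

/-- The approval voting choice set `G_A(u,b)`: alternatives with maximal
approval voting score. -/
def approvalSet {m n : ℕ} (u : Fin n → (Fin m ≃ Fin m)) (b : Fin n → ℕ) :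
    Finset (Fin m) :=
  univ.filter (fun x => ∀ y : Fin m, approvalScore u b y ≤ approvalScore u b x)

/-- If `S ⊆ X` with `|S| = k ≥ 1` and `k < n`, then there are a profile `u`
and an index vector `b` (each component in `{1,…,m}`) of gauge at most `2`
with `G_A(u,b) = S`. -/
theorem approval_range_k_lt_n (m n : ℕ) (hm : 3 ≤ m) (hn : 2 ≤ n)
    (S : Finset (Fin m)) (k : ℕ) (hcard : S.card = k) (hk : 1 ≤ k) (hkn : k < n) :
    ∃ (u : Fin n → (Fin m ≃ Fin m)) (b : Fin n → ℕ),
      (∀ i : Fin n, 1 ≤ b i ∧ b i ≤ m) ∧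
      (univ.sup b ≤ 2) ∧
      approvalSet u b = S := by
  haveI : NeZero m := ⟨by omega⟩
  have hkpos : 0 < k := hk
  set r : ℕ := n % k with hrdef
  have hrk : r < k := Nat.mod_lt _ hkpos
  set D : ℕ := if r = 0 then 0 else k - r with hDdef
  have hD1 : ∀ i, i < D → i < k := by
    intro i hi; rw [hDdef] at hi; split_ifs at hi <;> omega
  have hD2 : ∀ i, i < D → r + i < k := by
    intro i hi; rw [hDdef] at hi; split_ifs at hi <;> omega
  have hD0 : ∀ i, i < D → r ≠ 0 := by
    intro i hi; rw [hDdef] at hi; split_ifs at hi with h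
    · omega
    · exact h
  have hDr : r ≠ 0 → D = k - r := by intro h; rw [hDdef, if_neg h]
  have hD0' : r ≠ 0 → 0 < D := by intro h; rw [hDdef, if_neg h]; omega
  set e := S.orderEmbOfFin hcard with hedef
  have einj : Function.Injective e := (S.orderEmbOfFin hcard).injective
  have emem : ∀ j : Fin k, e j ∈ S := fun j => S.orderEmbOfFin_mem hcard j
  set u : Fin n → (Fin m ≃ Fin m) := fun i =>
    if h : (i : ℕ) < D then
      perm2 (e ⟨(i : ℕ), hD1 _ h⟩) (e ⟨r + (i : ℕ), hD2 _ h⟩)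
    else Equiv.swap (e ⟨(i : ℕ) % k, Nat.mod_lt _ hkpos⟩) 0 with hudef
  set b : Fin n → ℕ := fun i => if (i : ℕ) < D then 2 else 1 with hbdef
  have hne : ∀ (i : ℕ) (h : i < D),
      e ⟨i, hD1 _ h⟩ ≠ e ⟨r + i, hD2 _ h⟩ := by
    intro i h hh
    have := einj hh
    have hr0 := hD0 _ h
    rw [Fin.ext_iff] at this
    simp at this
    omega
  -- the key characterization of approvals
  have key : ∀ (i : Fin n) (j : Fin k),
      (((u i) (e j)).val < b i) ↔
        ((i : ℕ) % k = (j : ℕ) ∨ ((i : ℕ) < D ∧ r + (i : ℕ) = (j : ℕ))) := by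
    intro i j
    rw [hudef, hbdef]
    dsimp only
    split_ifs with h
    · rw [perm2_lt_two hm _ _ _ (hne _ h), einj.eq_iff, einj.eq_iff,
        Fin.ext_iff, Fin.ext_iff]
      simp only [Fin.val_mk]
      have hik : (i : ℕ) % k = (i : ℕ) := Nat.mod_eq_of_lt (hD1 _ h)
      constructor
      · rintro (hh | hh)
        · exact Or.inl (by omega)
        · exact Or.inr ⟨h, by omega⟩
      · rintro (hh | ⟨-, hh⟩)
        · exact Or.inl (by omega)
        · exact Or.inr (by omega)
    · rw [perm1_lt_one, einj.eq_iff, Fin.ext_iff]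
      simp only [h, false_and, or_false]
      exact eq_comm
  have score_out : ∀ y, y ∉ S → approvalScore u b y = 0 := by
    intro y hy
    rw [approvalScore, Finset.card_eq_zero, Finset.filter_eq_empty_iff]
    intro i _
    rw [hudef, hbdef]
    dsimp only
    split_ifs with h
    · rw [perm2_lt_two hm _ _ _ (hne _ h)]
      rintro (rfl | rfl) <;> exact hy (emem _)
    · rw [perm1_lt_one]
      rintro rfl; exact hy (emem _)
  have score_in : ∀ j : Fin k,
      approvalScore u b (e j) = n / k + if r = 0 then 0 else 1 := by
    intro j
    rw [approvalScore]
    have hsplit : (univ.filter fun i : Fin n => ((u i) (e j)).val < b i)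
        = (univ.filter fun i : Fin n => (i : ℕ) % k = (j : ℕ))
          ∪ (univ.filter fun i : Fin n => (i : ℕ) < D ∧ r + (i : ℕ) = (j : ℕ)) := by
      ext i
      simp only [mem_filter, mem_union, mem_univ, true_and]
      exact key i j
    rw [hsplit, card_union_of_disjoint, card_univ_filter_val (fun a => a % k = (j : ℕ)),
      card_range_filter_mod k (j : ℕ) hkpos j.isLt n]
    · have h2 : #(univ.filter fun i : Fin n => (i : ℕ) < D ∧ r + (i : ℕ) = (j : ℕ))
          = if r ≠ 0 ∧ r ≤ (j : ℕ) then 1 else 0 := by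
        split_ifs with hc
        · obtain ⟨hr0, hrj⟩ := hc
          have hjn : (j : ℕ) - r < n := by
            have := j.isLt; omega
          rw [show (univ.filter fun i : Fin n => (i : ℕ) < D ∧ r + (i : ℕ) = (j : ℕ))
              = {⟨(j : ℕ) - r, hjn⟩} from ?_, card_singleton]
          ext i
          simp only [mem_filter, mem_univ, true_and, mem_singleton, Fin.ext_iff]
          have hDk := hDr hr0
          have hjk := j.isLt
          constructor
          · rintro ⟨h1, h2⟩; omega
          · intro h1; simp only [h1]; constructor <;> omega
        · rw [Finset.card_eq_zero, Finset.filter_eq_empty_iff]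
          intro i _
          push_neg at hc
          rintro ⟨h1, h2⟩
          have := hD0 _ h1
          have := hc this
          omega
      rw [h2, ← hrdef]
      have hjk := j.isLt
      by_cases hr0 : r = 0
      · simp [hr0]
      · have := hDr hr0
        split_ifs <;> omega
    · rw [Finset.disjoint_filter]
      rintro i _ hik ⟨hiD, hri⟩
      have hr0 := hD0 _ hiD
      have := Nat.mod_eq_of_lt (hD1 _ hiD)
      omega
  have ht1 : 1 ≤ n / k + if r = 0 then 0 else 1 := by
    have : 1 ≤ n / k := Nat.one_le_div_iff hkpos |>.mpr hkn.le
    omega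
  refine ⟨u, b, ?_, ?_, ?_⟩
  · intro i
    rw [hbdef]; dsimp only; split_ifs <;> omega
  · apply Finset.sup_le
    intro i _
    rw [hbdef]; dsimp only; split_ifs <;> omega
  · ext x
    rw [approvalSet, mem_filter]
    simp only [mem_univ, true_and]
    constructor
    · intro hx
      by_contra hxS
      have h0 := score_out x hxS
      have := hx (e ⟨0, hkpos⟩)
      rw [score_in, h0] at this
      omega
    · intro hxS y
      have hx' : x ∈ Set.range e := by
        rw [hedef, S.range_orderEmbOfFin hcard]; exact hxS
      obtain ⟨j, rfl⟩ := hx'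
      rw [score_in]
      by_cases hyS : y ∈ S
      · have hy' : y ∈ Set.range e := by
          rw [hedef, S.range_orderEmbOfFin hcard]; exact hyS
        obtain ⟨j', rfl⟩ := hy'
        rw [score_in]
      · rw [score_out y hyS]
        exact Nat.zero_le _
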